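/- Let (A, B, C) be a recollement of abelian categories admitting a ladder of l-height three, i.e. functors l² ⊣ l¹ ⊣ l⁰ = l with l fully faithful. Then there is a recollement of abelian categories (Ker l¹, B, C) in which the quotient functor is l¹ : B ⥤ C with adjoint triple (l², l¹, l⁰). -/

import Mathlib

open CategoryTheory CategoryTheory.Limits

universe v₁ v₂ v₃ u₁ u₂ u₃

/-- A recollement of abelian categories `(A, B, C)`: adjoint triples `(q, i, p)` and
`(l, e, r)` with `i`, `l`, `r` fully faithful and the essential image of `i` equal to
the kernel of `e`. -/
structure AbRecollement (A : Type u₁) (B : Type u₂) (C : Type u₃)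
    [Category.{v₁} A] [Category.{v₂} B] [Category.{v₃} C]
    [Abelian A] [Abelian B] [Abelian C] where
  i : A ⥤ B
  e : B ⥤ C
  q : B ⥤ A
  p : B ⥤ A
  l : C ⥤ B
  r : C ⥤ B
  adj_qi : q ⊣ i
  adj_ip : i ⊣ p
  adj_le : l ⊣ e
  adj_er : e ⊣ r
  i_full : i.Full
  i_faithful : i.Faithful
  l_full : l.Full
  l_faithful : l.Faithful
  r_full : r.Full
  r_faithful : r.Faithful
  essImage_i_eq_ker_e : ∀ X : B, i.essImage X ↔ Limits.IsZero (e.obj X)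

/-- A recollement of abelian categories with prescribed middle and right terms `B`, `C`,
and unspecified abelian left term. -/
structure AbRecollementOver (B : Type u₂) (C : Type u₃)
    [Category.{v₂} B] [Category.{v₃} C] [Abelian B] [Abelian C] where
  A : Type u₁
  [catA : Category.{v₁} A]
  [abA : Abelian A]
  R : AbRecollement A B C

attribute [instance] AbRecollementOver.catA AbRecollementOver.abA

noncomputable section AuxKer

namespace RecLadderAux

lemma isZero_pt_of_isLimit {A : Type*} [Category A] [HasZeroMorphisms A]
    {J : Type*} [Category J] {G : J ⥤ A} (hG : ∀ j, IsZero (G.obj j))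
    {c : Cone G} (hc : IsLimit c) : IsZero c.pt := by
  rw [IsZero.iff_id_eq_zero]
  exact hc.hom_ext fun j => (hG j).eq_of_tgt _ _

lemma isZero_pt_of_isColimit {A : Type*} [Category A] [HasZeroMorphisms A]
    {J : Type*} [Category J] {G : J ⥤ A} (hG : ∀ j, IsZero (G.obj j))
    {c : Cocone G} (hc : IsColimit c) : IsZero c.pt := by
  rw [IsZero.iff_id_eq_zero]
  exact hc.hom_ext fun j => (hG j).eq_of_src _ _

variable {B : Type u₂} [Category.{v₂} B] [Abelian B] (P : B → Prop)

/-- `HasFiniteLimits` for a full subcategory closed under finite limits. -/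
lemma kerHasFiniteLimits
    (hlim : ∀ (J : Type) [SmallCategory J] [FinCategory J], ObjectProperty.IsClosedUnderLimitsOfShape P J) :
    HasFiniteLimits (ObjectProperty.FullSubcategory P) :=
  ⟨fun J _ _ => haveI := hlim J; hasLimitsOfShape_of_closedUnderLimits J P⟩

lemma kerHasFiniteColimits
    (hcolim : ∀ (J : Type) [SmallCategory J] [FinCategory J], ObjectProperty.IsClosedUnderColimitsOfShape P J) :
    HasFiniteColimits (ObjectProperty.FullSubcategory P) :=
  ⟨fun J _ _ => haveI := hcolim J; hasColimitsOfShape_of_closedUnderColimits J P⟩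

/-- A full subcategory of an abelian category closed under finite limits and colimits is
abelian. -/
def kerAbelian
    (hlim : ∀ (J : Type) [SmallCategory J] [FinCategory J], ObjectProperty.IsClosedUnderLimitsOfShape P J)
    (hcolim : ∀ (J : Type) [SmallCategory J] [FinCategory J], ObjectProperty.IsClosedUnderColimitsOfShape P J) :
    Abelian (ObjectProperty.FullSubcategory P) := by
  haveI := kerHasFiniteLimits P hlim
  haveI := kerHasFiniteColimits P hcolim
  haveI : CreatesLimitsOfShape WalkingParallelPair (ObjectProperty.ι P) :=
    haveI := hlim WalkingParallelPair; createsLimitsOfShapeFullSubcategoryInclusion _ P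
  haveI : CreatesColimitsOfShape WalkingParallelPair (ObjectProperty.ι P) :=
    haveI := hcolim WalkingParallelPair; createsColimitsOfShapeFullSubcategoryInclusion _ P
  haveI : ∀ {X Y : ObjectProperty.FullSubcategory P} (f : X ⟶ Y),
      IsIso (Abelian.coimageImageComparison f) := by
    intro X Y f
    set ι := ObjectProperty.ι P with hι
    set g := ι.map f with hg
    -- kernel and cokernel comparisons
    have hkc : kernelComparison f ι ≫ kernel.ι g = ι.map (kernel.ι f) :=
      kernelComparison_comp_ι f ι
    have hcc : cokernel.π g ≫ cokernelComparison f ι = ι.map (cokernel.π f) :=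
      π_comp_cokernelComparison f ι
    have hcc₁ : cokernel.π (ι.map (kernel.ι f)) ≫ cokernelComparison (kernel.ι f) ι
        = ι.map (cokernel.π (kernel.ι f)) := π_comp_cokernelComparison _ ι
    have hkc₂ : kernelComparison (cokernel.π f) ι ≫ kernel.ι (ι.map (cokernel.π f))
        = ι.map (kernel.ι (cokernel.π f)) := kernelComparison_comp_ι _ ι
    -- the map `e₁ : coimage g ⟶ ι.obj (coimage f)` and its inverse
    have hz₁ : kernel.ι g ≫ ι.map (cokernel.π (kernel.ι f)) = 0 := by
      have h : kernel.ι g = inv (kernelComparison f ι) ≫ ι.map (kernel.ι f) := by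
        rw [← hkc, IsIso.inv_hom_id_assoc]
      rw [h, Category.assoc, ← ι.map_comp, cokernel.condition, ι.map_zero, comp_zero]
    let e₁ : Abelian.coimage g ⟶ ι.obj (Abelian.coimage f) :=
      cokernel.desc _ (ι.map (cokernel.π (kernel.ι f))) hz₁
    have he₁π : cokernel.π (kernel.ι g) ≫ e₁ = ι.map (cokernel.π (kernel.ι f)) :=
      cokernel.π_desc _ _ _
    have hz₃ : ι.map (kernel.ι f) ≫ cokernel.π (kernel.ι g) = 0 := by
      rw [← hkc, Category.assoc, cokernel.condition, comp_zero]
    let d₁ : cokernel (ι.map (kernel.ι f)) ⟶ Abelian.coimage g :=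
      cokernel.desc _ (cokernel.π (kernel.ι g)) hz₃
    have hd₁π : cokernel.π (ι.map (kernel.ι f)) ≫ d₁ = cokernel.π (kernel.ι g) :=
      cokernel.π_desc _ _ _
    haveI hiso₁ : IsIso e₁ := by
      refine ⟨inv (cokernelComparison (kernel.ι f) ι) ≫ d₁, ?_, ?_⟩
      · rw [← cancel_epi (cokernel.π (kernel.ι g)), Category.comp_id, ← Category.assoc, he₁π,
          ← hcc₁, Category.assoc, IsIso.hom_inv_id_assoc, hd₁π]
      · rw [← cancel_epi (cokernelComparison (kernel.ι f) ι), Category.comp_id,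
          Category.assoc, IsIso.hom_inv_id_assoc,
          ← cancel_epi (cokernel.π (ι.map (kernel.ι f))), ← Category.assoc, hd₁π, he₁π, hcc₁]
    -- the map `e₂ : ι.obj (image f) ⟶ image g` and its inverse
    have hz₂ : ι.map (kernel.ι (cokernel.π f)) ≫ cokernel.π g = 0 := by
      rw [← cancel_mono (cokernelComparison f ι), zero_comp, Category.assoc, hcc,
        ← ι.map_comp, kernel.condition, ι.map_zero]
    let e₂ : ι.obj (Abelian.image f) ⟶ Abelian.image g :=
      kernel.lift _ (ι.map (kernel.ι (cokernel.π f))) hz₂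
    have he₂ι : e₂ ≫ kernel.ι (cokernel.π g) = ι.map (kernel.ι (cokernel.π f)) :=
      kernel.lift_ι _ _ _
    have hz₄ : kernel.ι (cokernel.π g) ≫ ι.map (cokernel.π f) = 0 := by
      rw [← hcc, ← Category.assoc, kernel.condition, zero_comp]
    let d₂ : Abelian.image g ⟶ kernel (ι.map (cokernel.π f)) :=
      kernel.lift _ (kernel.ι (cokernel.π g)) hz₄
    have hd₂ι : d₂ ≫ kernel.ι (ι.map (cokernel.π f)) = kernel.ι (cokernel.π g) :=
      kernel.lift_ι _ _ _
    haveI hiso₂ : IsIso e₂ := by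
      refine ⟨d₂ ≫ inv (kernelComparison (cokernel.π f) ι), ?_, ?_⟩
      · rw [← cancel_mono (kernelComparison (cokernel.π f) ι), Category.id_comp,
          Category.assoc, Category.assoc, IsIso.inv_hom_id, Category.comp_id,
          ← cancel_mono (kernel.ι (ι.map (cokernel.π f))), Category.assoc, hd₂ι, he₂ι, hkc₂]
      · rw [← cancel_mono (kernel.ι (cokernel.π g)), Category.id_comp, Category.assoc, he₂ι,
          ← hkc₂, Category.assoc, IsIso.inv_hom_id_assoc, hd₂ι]
    -- the comparison morphisms agree up to the isomorphisms `e₁`, `e₂`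
    have key : Abelian.coimage.π g ≫
        (e₁ ≫ ι.map (Abelian.coimageImageComparison f) ≫ e₂) ≫ Abelian.image.ι g = g := by
      simp only [Category.assoc]
      rw [reassoc_of% he₁π, he₂ι, ← ι.map_comp, ← ι.map_comp,
        Abelian.coimage_image_factorisation]
    have hmain : e₁ ≫ ι.map (Abelian.coimageImageComparison f) ≫ e₂
        = Abelian.coimageImageComparison g := by
      rw [← cancel_mono (Abelian.image.ι g), ← cancel_epi (Abelian.coimage.π g), key,
        Abelian.coimage_image_factorisation]
    haveI : IsIso (ι.map (Abelian.coimageImageComparison f)) := by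
      have h : ι.map (Abelian.coimageImageComparison f)
          = inv e₁ ≫ Abelian.coimageImageComparison g ≫ inv e₂ := by
        rw [← hmain]; simp
      rw [h]; infer_instance
    exact isIso_of_reflects_iso (Abelian.coimageImageComparison f) ι
  exact Abelian.ofCoimageImageComparisonIsIso

section PAdj

variable {B' : Type u₂} {C' : Type u₃} [Category.{v₂} B'] [Category.{v₃} C']
  [Abelian B'] [Abelian C']
variable (P : B' → Prop) {l₀ : C' ⥤ B'} {l₁ : B' ⥤ C'} (adj₁₀ : l₁ ⊣ l₀)
  (hzero : ∀ X : ObjectProperty.FullSubcategory P, IsZero (l₁.obj X.obj))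
  (hp : ∀ Y : B', P (kernel (adj₁₀.unit.app Y)))

/-- The hom-set bijection exhibiting `Y ↦ kernel (unit.app Y)` as a right adjoint of the
inclusion of the kernel of `l₁`. -/
def pEquiv (X : ObjectProperty.FullSubcategory P) (Y : B') :
    ((ObjectProperty.ι P).obj X ⟶ Y) ≃
      (X ⟶ (⟨kernel (adj₁₀.unit.app Y), hp Y⟩ : ObjectProperty.FullSubcategory P)) where
  toFun gg := ObjectProperty.homMk (kernel.lift _ gg (by
    refine (adj₁₀.homEquiv X.obj (l₁.obj Y)).symm.injective ?_
    exact (hzero X).eq_of_src _ _))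
  invFun h := h.hom ≫ kernel.ι _
  left_inv gg := kernel.lift_ι _ _ _
  right_inv h := by
    ext; exact kernel.lift_ι _ _ _

set_option linter.unusedSectionVars false in
lemma pEquiv_ι (X : ObjectProperty.FullSubcategory P) (Y : B') (gg) :
    (ObjectProperty.ι P).map (pEquiv P adj₁₀ hzero hp X Y gg) ≫
      kernel.ι (adj₁₀.unit.app Y) = gg :=
  kernel.lift_ι _ _ _

lemma pEquiv_nat (X' X : ObjectProperty.FullSubcategory P) (Y : B') (f : X' ⟶ X) (g) :
    pEquiv P adj₁₀ hzero hp X' Y ((ObjectProperty.ι P).map f ≫ g)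
      = f ≫ pEquiv P adj₁₀ hzero hp X Y g := by
  apply (ObjectProperty.ι P).map_injective
  rw [← cancel_mono (kernel.ι (adj₁₀.unit.app Y)), pEquiv_ι, Functor.map_comp, Category.assoc,
    pEquiv_ι]

end PAdj

end RecLadderAux

end AuxKer

/-- Let `(A, B, C)` be a recollement of abelian categories admitting a
ladder of `l`-height three, i.e. functors `l² ⊣ l¹ ⊣ l⁰ = l`.  Then there is a
recollement of abelian categories `(Ker l¹, B, C)` in which the quotient functor is
`l¹ : B ⥤ C` with adjoint triple `(l², l¹, l⁰)`. -/
theorem recollement_of_ladder_l_height_three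
    {A : Type u₁} {B : Type u₂} {C : Type u₃}
    [Category.{v₁} A] [Category.{v₂} B] [Category.{v₃} C]
    [Abelian A] [Abelian B] [Abelian C]
    (R : AbRecollement A B C)
    (l₁ : B ⥤ C) (l₂ : C ⥤ B)
    (adj₂₁ : l₂ ⊣ l₁) (adj₁₀ : l₁ ⊣ R.l) :
    ∃ S : AbRecollementOver.{v₂, v₂, v₃, u₂, u₂, u₃} B C,
      S.R.e = l₁ ∧ S.R.l = l₂ ∧ S.R.r = R.l ∧
      (∀ X : B, S.R.i.essImage X ↔ Limits.IsZero (l₁.obj X)) := by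
  have hL : PreservesLimitsOfSize.{0, 0} l₁ := adj₂₁.rightAdjoint_preservesLimits
  have hC : PreservesColimitsOfSize.{0, 0} l₁ := adj₁₀.leftAdjoint_preservesColimits
  haveI := hL; haveI := hC
  haveI : l₁.IsLeftAdjoint := ⟨R.l, ⟨adj₁₀⟩⟩
  set P : B → Prop := fun X => IsZero (l₁.obj X) with hP
  have hlim : ∀ (J : Type) [SmallCategory J] [FinCategory J], ObjectProperty.IsClosedUnderLimitsOfShape P J := by
    intro J _ _
    exact ⟨fun X ⟨h⟩ => RecLadderAux.isZero_pt_of_isLimit (G := h.diag ⋙ l₁) h.prop_diag_obj (isLimitOfPreserves l₁ h.isLimit)⟩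
  have hcolim : ∀ (J : Type) [SmallCategory J] [FinCategory J],
      ObjectProperty.IsClosedUnderColimitsOfShape P J := by
    intro J _ _
    exact ⟨fun X ⟨h⟩ => RecLadderAux.isZero_pt_of_isColimit (G := h.diag ⋙ l₁) h.prop_diag_obj (isColimitOfPreserves l₁ h.isColimit)⟩
  letI abel : Abelian (ObjectProperty.FullSubcategory P) := RecLadderAux.kerAbelian P hlim hcolim
  -- the left adjoint `q` of the inclusion
  have hq : ∀ X : B, P (cokernel (adj₂₁.counit.app X)) := by
    intro X
    haveI : IsSplitEpi (l₁.map (adj₂₁.counit.app X)) :=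
      ⟨⟨⟨adj₂₁.unit.app (l₁.obj X), adj₂₁.right_triangle_components X⟩⟩⟩
    exact (isZero_zero _).of_iso ((PreservesCokernel.iso l₁ _).trans (cokernel.ofEpi _))
  let eq : ∀ (X : B) (Y : ObjectProperty.FullSubcategory P),
      ((⟨cokernel (adj₂₁.counit.app X), hq X⟩ : ObjectProperty.FullSubcategory P) ⟶ Y) ≃
        (X ⟶ (ObjectProperty.ι P).obj Y) := fun X Y =>
    { toFun := fun h => cokernel.π _ ≫ h.hom
      invFun := fun gg => ObjectProperty.homMk <| cokernel.desc _ gg (by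
        refine (adj₂₁.homEquiv (l₁.obj X) Y.obj).injective ?_
        exact Y.property.eq_of_tgt _ _)
      left_inv := fun h => by
        ext; exact cokernel.π_desc _ _ _
      right_inv := fun gg => cokernel.π_desc _ _ _ }
  have he : ∀ (X : B) (Y Y' : ObjectProperty.FullSubcategory P) (g : Y ⟶ Y') (h), eq X Y' (h ≫ g)
      = eq X Y h ≫ (ObjectProperty.ι P).map g :=
    fun X Y Y' g h => (Category.assoc _ _ _).symm
  -- the right adjoint `p` of the inclusion
  have hp : ∀ X : B, P (kernel (adj₁₀.unit.app X)) := by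
    intro X
    haveI : IsSplitMono (l₁.map (adj₁₀.unit.app X)) :=
      ⟨⟨⟨adj₁₀.counit.app (l₁.obj X), adj₁₀.left_triangle_components X⟩⟩⟩
    exact (isZero_zero _).of_iso ((PreservesKernel.iso l₁ _).trans (kernel.ofMono _))
  let eq' := RecLadderAux.pEquiv P adj₁₀ (fun X => X.property) hp
  have he' := RecLadderAux.pEquiv_nat P adj₁₀ (fun X => X.property) hp
  -- full faithfulness of `l₂`
  haveI := R.l_full
  haveI := R.l_faithful
  let ffl₂ : l₂.FullyFaithful :=
    (Adjunction.Triple.fullyFaithfulEquiv ⟨adj₂₁, adj₁₀⟩).symm (Functor.FullyFaithful.ofFullyFaithful R.l)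
  haveI := ffl₂.full
  haveI := ffl₂.faithful
  -- essential image of the inclusion
  have hess : ∀ X : B, (ObjectProperty.ι P).essImage X ↔ IsZero (l₁.obj X) := by
    intro X
    constructor
    · rintro ⟨Y, ⟨iso⟩⟩
      exact Y.property.of_iso (l₁.mapIso iso).symm
    · intro h
      exact ⟨⟨X, h⟩, ⟨Iso.refl X⟩⟩
  let R' : AbRecollement (ObjectProperty.FullSubcategory P) B C :=
    { i := ObjectProperty.ι P
      e := l₁
      q := Adjunction.leftAdjointOfEquiv eq he
      p := Adjunction.rightAdjointOfEquiv eq' he'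
      l := l₂
      r := R.l
      adj_qi := Adjunction.adjunctionOfEquivLeft eq he
      adj_ip := Adjunction.adjunctionOfEquivRight eq' he'
      adj_le := adj₂₁
      adj_er := adj₁₀
      i_full := inferInstance
      i_faithful := inferInstance
      l_full := inferInstance
      l_faithful := inferInstance
      r_full := inferInstance
      r_faithful := inferInstance
      essImage_i_eq_ker_e := hess }
  exact ⟨{ A := ObjectProperty.FullSubcategory P, catA := inferInstance, abA := abel, R := R' },
    rfl, rfl, rfl, hess⟩
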